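/- Let U be an n×n unitary complex matrix with symmetric support (U i j ≠ 0 ↔ U j i ≠ 0), and let G be the simple graph with G.Adj i j ↔ (i ≠ j ∧ U i j ≠ 0). If G is connected and has at least 3 vertices, then G has no bridges: no edge of G is a bridge. -/

import Mathlib

open Finset

/-- Key matrix lemma: if a finset `A` separates `U` (the only nonzero entries of `U`
crossing `A`/`Aᶜ` are at `(a,b)` and `(b,a)`), and `U b a ≠ 0`, then column `a`
vanishes inside `A` off the diagonal. -/
private lemma key_lemma {n : ℕ} (U : Matrix (Fin n) (Fin n) ℂ)
    (h1 : star U * U = 1) (h2 : U * star U = 1)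
    (A : Finset (Fin n)) (a b : Fin n) (ha : a ∈ A) (hb : b ∉ A)
    (hba : U b a ≠ 0)
    (hout : ∀ i ∉ A, ∀ j ∈ A, U i j ≠ 0 → i = b ∧ j = a)
    (hout' : ∀ i ∈ A, ∀ j ∉ A, U i j ≠ 0 → i = a ∧ j = b) :
    ∀ i ∈ A, i ≠ a → U i a = 0 := by
  classical
  have hcolfull : ∀ j k, ∑ i, star (U i j) * U i k = if j = k then (1:ℂ) else 0 := by
    intro j k
    have := congrArg (fun M => M j k) h1
    simpa [Matrix.mul_apply, Matrix.star_eq_conjTranspose, Matrix.conjTranspose_apply,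
      Matrix.one_apply] using this
  have hrowfull : ∀ i k, ∑ j, U i j * star (U k j) = if i = k then (1:ℂ) else 0 := by
    intro i k
    have := congrArg (fun M => M i k) h2
    simpa [Matrix.mul_apply, Matrix.star_eq_conjTranspose, Matrix.conjTranspose_apply,
      Matrix.one_apply] using this
  -- restricted column relations
  have hcol : ∀ j ∈ A, ∀ k ∈ A,
      ∑ i ∈ A, star (U i j) * U i k =
        (if j = k then (1:ℂ) else 0) -
          (if j = a then star (U b a) else 0) * (if k = a then U b a else 0) := by
    intro j hj k hk
    have hsplit : ∑ i ∈ A, star (U i j) * U i k + ∑ i ∈ Aᶜ, star (U i j) * U i k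
        = if j = k then (1:ℂ) else 0 := by
      rw [Finset.sum_add_sum_compl]; exact hcolfull j k
    have hcompl : ∑ i ∈ Aᶜ, star (U i j) * U i k
        = (if j = a then star (U b a) else 0) * (if k = a then U b a else 0) := by
      rw [Finset.sum_eq_single_of_mem b (by simpa using hb)]
      · by_cases hja : j = a
        · by_cases hka : k = a
          · simp [hja, hka]
          · have hz : U b k = 0 := by
              by_contra h
              exact hka (hout b hb k hk h).2
            simp [hja, hka, hz]
        · have hz : U b j = 0 := by
            by_contra h
            exact hja (hout b hb j hj h).2
          simp [hja, hz]
      · intro i hi hib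
        have hz : U i j = 0 := by
          by_contra h
          exact hib (hout i (by simpa using hi) j hj h).1
        simp [hz]
    rw [hcompl] at hsplit
    linear_combination hsplit
  -- restricted row relations
  have hrow : ∀ i ∈ A, ∀ k ∈ A,
      ∑ j ∈ A, U i j * star (U k j) =
        (if i = k then (1:ℂ) else 0) -
          (if i = a then U a b else 0) * (if k = a then star (U a b) else 0) := by
    intro i hi k hk
    have hsplit : ∑ j ∈ A, U i j * star (U k j) + ∑ j ∈ Aᶜ, U i j * star (U k j)
        = if i = k then (1:ℂ) else 0 := by
      rw [Finset.sum_add_sum_compl]; exact hrowfull i k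
    have hcompl : ∑ j ∈ Aᶜ, U i j * star (U k j)
        = (if i = a then U a b else 0) * (if k = a then star (U a b) else 0) := by
      rw [Finset.sum_eq_single_of_mem b (by simpa using hb)]
      · by_cases hia : i = a
        · by_cases hka : k = a
          · simp [hia, hka]
          · have hz : U k b = 0 := by
              by_contra h
              exact hka (hout' k hk b hb h).1
            simp [hia, hka, hz]
        · have hz : U i b = 0 := by
            by_contra h
            exact hia (hout' i hi b hb h).1
          simp [hia, hz]
      · intro j hj hjb
        have hz : U i j = 0 := by
          by_contra h
          exact hjb (hout' i hi j (by simpa using hj) h).2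
        simp [hz]
    rw [hcompl] at hsplit
    linear_combination hsplit
  -- trace identity: |U b a|² = |U a b|²
  have htr : star (U b a) * U b a = U a b * star (U a b) := by
    have e1 : ∑ j ∈ A, ∑ i ∈ A, star (U i j) * U i j
        = (A.card : ℂ) - star (U b a) * U b a := by
      rw [Finset.sum_congr rfl (fun j hj => hcol j hj j hj)]
      rw [Finset.sum_sub_distrib]
      simp [ha]
    have e2 : ∑ i ∈ A, ∑ j ∈ A, U i j * star (U i j)
        = (A.card : ℂ) - U a b * star (U a b) := by
      rw [Finset.sum_congr rfl (fun i hi => hrow i hi i hi)]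
      rw [Finset.sum_sub_distrib]
      simp [ha]
    have e3 : ∑ j ∈ A, ∑ i ∈ A, star (U i j) * U i j
        = ∑ i ∈ A, ∑ j ∈ A, U i j * star (U i j) := by
      rw [Finset.sum_comm]
      exact Finset.sum_congr rfl fun i _ => Finset.sum_congr rfl fun j _ => mul_comm _ _
    rw [e1, e2] at e3
    linear_combination -e3
  -- main computation
  intro i hi hia
  have T1 : ∑ j ∈ A, U i j * ∑ k ∈ A, star (U k j) * U k a
      = U i a * (1 - star (U b a) * U b a) := by
    rw [Finset.sum_congr rfl (fun j hj => by rw [hcol j hj a ha])]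
    rw [Finset.sum_eq_single_of_mem a ha]
    · simp
    · intro j hj hja
      simp [hja]
  have T2 : ∑ k ∈ A, (∑ j ∈ A, U i j * star (U k j)) * U k a = U i a := by
    rw [Finset.sum_congr rfl (fun k hk => by rw [hrow i hi k hk])]
    rw [Finset.sum_eq_single_of_mem i hi]
    · simp [hia]
    · intro k hk hki
      simp [Ne.symm hki, hia]
  have hswap : ∑ j ∈ A, U i j * ∑ k ∈ A, star (U k j) * U k a
      = ∑ k ∈ A, (∑ j ∈ A, U i j * star (U k j)) * U k a := by
    simp_rw [Finset.mul_sum, Finset.sum_mul]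
    rw [Finset.sum_comm]
    exact Finset.sum_congr rfl fun k _ => Finset.sum_congr rfl fun j _ => by ring
  rw [T1, T2] at hswap
  have hne : star (U b a) * U b a ≠ 0 := mul_ne_zero (star_ne_zero.2 hba) hba
  have : U i a * (star (U b a) * U b a) = 0 := by linear_combination -hswap
  exact (mul_eq_zero.1 this).resolve_right hne

private lemma reach_aux {V : Type*} {G G' : SimpleGraph V} {a b : V}
    (hadj : ∀ x y, G.Adj x y → s(x, y) ≠ s(a, b) → G'.Adj x y) :
    ∀ {x y : V}, G.Walk x y → (G'.Reachable a x ∨ G'.Reachable b x) →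
      (G'.Reachable a y ∨ G'.Reachable b y) := by
  intro x y w
  induction w with
  | nil => exact id
  | @cons u v _ h p ih =>
    intro hx
    apply ih
    by_cases hs : s(u, v) = s(a, b)
    · rcases Sym2.eq_iff.1 hs with ⟨rfl, rfl⟩ | ⟨rfl, rfl⟩
      · exact Or.inr (SimpleGraph.Reachable.refl _)
      · exact Or.inl (SimpleGraph.Reachable.refl _)
    · have hadj' : G'.Adj u v := hadj u v h hs
      rcases hx with hl | hr
      · exact Or.inl (hl.trans hadj'.reachable)
      · exact Or.inr (hr.trans hadj'.reachable)

/-- In the graph of a unitary matrix, if the graph is connected and has at least 3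
vertices then it has no bridges (it is 2-edge-connected). -/
theorem stmt_4 (n : ℕ) (U : Matrix (Fin n) (Fin n) ℂ)
    (hU : U ∈ Matrix.unitaryGroup (Fin n) ℂ)
    (hsym : ∀ i j, U i j ≠ 0 ↔ U j i ≠ 0)
    (G : SimpleGraph (Fin n)) (hG : ∀ i j, G.Adj i j ↔ i ≠ j ∧ U i j ≠ 0)
    (hconn : G.Connected) (hcard : 3 ≤ n) :
    ∀ e : Sym2 (Fin n), ¬ G.IsBridge e := by
  classical
  refine Sym2.ind (fun a b => ?_) 
  intro hbridge
  rw [SimpleGraph.isBridge_iff] at hbridge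
  have hnr := hbridge
  have hadj : G.Adj a b := by
    by_contra hna
    apply hnr
    obtain ⟨w⟩ := hconn.preconnected a b
    exact ⟨w.toDeleteEdge s(a, b) (fun he => hna (w.adj_of_mem_edges he))⟩
  set G' : SimpleGraph (Fin n) := G \ SimpleGraph.fromEdgeSet {s(a, b)} with hG'
  have hG'adj : ∀ x y, G'.Adj x y ↔ G.Adj x y ∧ s(x, y) ≠ s(a, b) := by
    intro x y
    simp only [hG', SimpleGraph.sdiff_adj, SimpleGraph.fromEdgeSet_adj, Set.mem_singleton_iff]
    constructor
    · rintro ⟨h, h2⟩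
      exact ⟨h, fun he => h2 ⟨he, h.ne⟩⟩
    · rintro ⟨h, h2⟩
      exact ⟨h, fun he => h2 he.1⟩
  have h1 : star U * U = 1 := hU.1
  have h2 : U * star U = 1 := hU.2
  set A : Finset (Fin n) := Finset.univ.filter (fun x => G'.Reachable a x) with hA
  have hmemA : ∀ x, x ∈ A ↔ G'.Reachable a x := by
    intro x; simp [hA]
  have haA : a ∈ A := (hmemA a).2 (SimpleGraph.Reachable.refl a)
  have hbA : b ∉ A := fun h => hnr ((hmemA b).1 h)
  -- separation
  have hout : ∀ i ∉ A, ∀ j ∈ A, U i j ≠ 0 → i = b ∧ j = a := by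
    intro i hi j hj hne
    have hij : i ≠ j := fun h => hi (h ▸ hj)
    have hadj' : G.Adj i j := (hG i j).2 ⟨hij, hne⟩
    have hsij : s(i, j) = s(a, b) := by
      by_contra hs
      have : G'.Adj j i := (hG'adj j i).2 ⟨hadj'.symm, by rwa [Sym2.eq_swap]⟩
      exact hi ((hmemA i).2 (((hmemA j).1 hj).trans this.reachable))
    rcases Sym2.eq_iff.1 hsij with ⟨rfl, rfl⟩ | ⟨rfl, rfl⟩
    · exact absurd haA hi
    · exact ⟨rfl, rfl⟩
  have hout' : ∀ i ∈ A, ∀ j ∉ A, U i j ≠ 0 → i = a ∧ j = b := by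
    intro i hi j hj hne
    have := hout j hj i hi ((hsym i j).1 hne)
    exact ⟨this.2, this.1⟩
  have hba : U b a ≠ 0 := (hsym a b).1 ((hG a b).1 hadj).2
  have hab : U a b ≠ 0 := ((hG a b).1 hadj).2
  -- the two key conclusions
  have keyA : ∀ i ∈ A, i ≠ a → U i a = 0 := key_lemma U h1 h2 A a b haA hbA hba hout hout'
  have houtC : ∀ i ∉ Aᶜ, ∀ j ∈ Aᶜ, U i j ≠ 0 → i = a ∧ j = b := by
    intro i hi j hj hne
    exact hout' i (by simpa using hi) j (by simpa using hj) hne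
  have houtC' : ∀ i ∈ Aᶜ, ∀ j ∉ Aᶜ, U i j ≠ 0 → i = b ∧ j = a := by
    intro i hi j hj hne
    exact hout i (by simpa using hi) j (by simpa using hj) hne
  have keyB : ∀ i ∈ Aᶜ, i ≠ b → U i b = 0 :=
    key_lemma U h1 h2 Aᶜ b a (by simpa using hbA) (by simpa using haA) hab houtC houtC'
  -- every vertex reaches a or b in G'
  have hreach : ∀ x : Fin n, G'.Reachable a x ∨ G'.Reachable b x := by
    intro x
    obtain ⟨w⟩ := hconn.preconnected a x
    exact reach_aux (fun u v hu hs => (hG'adj u v).2 ⟨hu, hs⟩) w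
      (Or.inl (SimpleGraph.Reachable.refl a))
  -- find a third vertex
  obtain ⟨c, hca, hcb⟩ : ∃ c : Fin n, c ≠ a ∧ c ≠ b := by
    by_contra h
    push_neg at h
    have hsub : (Finset.univ : Finset (Fin n)) ⊆ {a, b} := by
      intro x _
      rcases eq_or_ne x a with rfl | hx
      · simp
      · simp [h x hx]
    have := Finset.card_le_card hsub
    simp only [Finset.card_univ, Fintype.card_fin] at this
    have h2' : ({a, b} : Finset (Fin n)).card ≤ 2 := Finset.card_insert_le _ _ |>.trans (by simp)
    omega
  by_cases hcA : c ∈ A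
  · -- neighbor of a inside A
    obtain ⟨w⟩ := (hmemA c).1 hcA
    cases w with
    | nil => exact hca rfl
    | @cons _ v _ h p =>
      have hvA : v ∈ A := (hmemA v).2 h.reachable
      have hva : v ≠ a := fun hv => (hv ▸ h).ne rfl
      have : U v a ≠ 0 := (hsym a v).1 ((hG a v).1 ((hG'adj a v).1 h).1).2
      exact this (keyA v hvA hva)
  · have hrb : G'.Reachable b c := by
      rcases hreach c with hl | hr
      · exact absurd ((hmemA c).2 hl) hcA
      · exact hr
    obtain ⟨w⟩ := hrb
    cases w with
    | nil => exact hcb rfl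
    | @cons _ v _ h p =>
      have hvA : v ∉ A := by
        intro hv
        exact hbA ((hmemA b).2 (((hmemA v).1 hv).trans h.symm.reachable))
      have hvb : v ≠ b := fun hv => (hv ▸ h).ne rfl
      have : U v b ≠ 0 := (hsym b v).1 ((hG b v).1 ((hG'adj b v).1 h).1).2
      exact this (keyB v (by simpa using hvA) hvb)
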